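/- arXiv:2102.11200 — 3 statements merged into one kernel-verified Lean document; each statement's English description precedes it below -/
import Mathlib

section
/- The set V_{J,η} of points α in the hyperplane e_J^⊥ ⊂ M_R such that α is (J,η)-generic and η is (J,α)-generic is the complement of finitely many hyperplanes in e_J^⊥; in particular it is open and dense in e_J^⊥. -/
inductive BTree (ι : Type) where
  | leaf : ι → BTree ι
  | node : BTree ι → BTree ι → BTree ι

namespace BTree

variable {ι : Type}

def leafList : BTree ι → List ι
  | .leaf i => [i]
  | .node l r => leafList l ++ leafList r

def leafSet [DecidableEq ι] (t : BTree ι) : Finset ι := t.leafList.toFinset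

def DecoratedBy [DecidableEq ι] (J : Finset ι) (t : BTree ι) : Prop :=
  t.leafList.Nodup ∧ t.leafSet = J

end BTree

def evalF {ι : Type} (θ : ι → ℝ) (S : Finset ι) : ℝ := ∑ i ∈ S, θ i

def pairS {ι : Type} (ω : ι → ι → ℝ) (S S' : Finset ι) : ℝ := ∑ i ∈ S, ∑ j ∈ S', ω i j

def iotaW {ι : Type} (ω : ι → ι → ℝ) (S : Finset ι) : ι → ℝ := fun j => ∑ i ∈ S, ω i j

/-- One step of the discrete attractor flow at a vertex with children `l, r`. -/
noncomputable def stepL {ι : Type} [DecidableEq ι] (ω : ι → ι → ℝ) (θp : ι → ℝ)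
    (l r : BTree ι) : ι → ℝ :=
  fun j => θp j -
    (evalF θp l.leafSet / pairS ω (l.leafSet ∪ r.leafSet) l.leafSet) *
      iotaW ω (l.leafSet ∪ r.leafSet) j

/-- `T ∈ 𝒯_J^η`: the tree is binary with `η(e_{v'}, e_{v''}) ≠ 0` for `v` the child
of the root, with children `v', v''`. -/
def Teta {ι : Type} [DecidableEq ι] (η : ι → ι → ℝ) (t : BTree ι) : Prop :=
  ∃ l r : BTree ι, t = .node l r ∧ pairS η l.leafSet r.leafSet ≠ 0

/-- `α ∈ e_J^⊥` is `(J,η)`-generic: for every `J`-decorated binary rooted tree in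
`𝒯_J^η`, `α(e_{v'}) ≠ 0` where `v` is the child of the root. -/
def JGeneric {ι : Type} [DecidableEq ι] (η : ι → ι → ℝ) (J : Finset ι) (α : ι → ℝ) : Prop :=
  ∀ t l r : BTree ι, t.DecoratedBy J → t = .node l r →
    pairS η l.leafSet r.leafSet ≠ 0 → evalF α l.leafSet ≠ 0

/-- `FlowNZ ω θp t`: along the discrete attractor flow for `ω` on the tree `t`
(with parent flow value `θp` at the top), at every interior vertex `v` one has
`θ_{p(v)}(e_{v'}) ≠ 0` and `θ_{p(v)}(e_{v''}) ≠ 0`. -/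
def FlowNZ {ι : Type} [DecidableEq ι] (ω : ι → ι → ℝ) : (ι → ℝ) → BTree ι → Prop
  | _, .leaf _ => True
  | θp, .node l r =>
      evalF θp l.leafSet ≠ 0 ∧ evalF θp r.leafSet ≠ 0 ∧
      FlowNZ ω (stepL ω θp l r) l ∧ FlowNZ ω (stepL ω θp l r) r

/-- `η` is `(J,α)`-generic: the flow for `η` started at `α` has nonvanishing values
`θ_{T,p(v)}(e_{v'}), θ_{T,p(v)}(e_{v''})` for every `T ∈ 𝒯_J^η` and interior `v`. -/
def EtaGenericAt {ι : Type} [DecidableEq ι] (η : ι → ι → ℝ) (J : Finset ι)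
    (α : ι → ℝ) : Prop :=
  ∀ t : BTree ι, t.DecoratedBy J → Teta η t → FlowNZ η α t


/-! ### Auxiliary material for the proof -/

namespace VJetaAux

open BTree

variable {ι : Type} [DecidableEq ι]

/-- `evalF` as a linear map. -/
noncomputable def evalFL (S : Finset ι) : (ι → ℝ) →ₗ[ℝ] ℝ where
  toFun θ := evalF θ S
  map_add' x y := by simp [evalF, Finset.sum_add_distrib]
  map_smul' c x := by simp [evalF, Finset.mul_sum]

@[simp] lemma evalFL_apply (S : Finset ι) (θ : ι → ℝ) : evalFL S θ = evalF θ S := rfl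

/-- One step of the discrete attractor flow, as a linear map in the parent value. -/
noncomputable def stepLmap (ω : ι → ι → ℝ) (l r : BTree ι) : (ι → ℝ) →ₗ[ℝ] (ι → ℝ) where
  toFun θ := stepL ω θ l r
  map_add' x y := by
    funext j
    simp only [stepL, evalF, Pi.add_apply, Finset.sum_add_distrib]
    ring
  map_smul' c x := by
    funext j
    simp only [stepL, evalF, Pi.smul_apply, smul_eq_mul, RingHom.id_apply, ← Finset.mul_sum]
    ring

@[simp] lemma stepLmap_apply (ω : ι → ι → ℝ) (l r : BTree ι) (θ : ι → ℝ) :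
    stepLmap ω l r θ = stepL ω θ l r := rfl

/-- The list of all linear forms appearing in the `FlowNZ` conditions on a tree,
precomposed with a linear map `Θ` recording the flow from the root. -/
noncomputable def flowForms (ω : ι → ι → ℝ) :
    BTree ι → ((ι → ℝ) →ₗ[ℝ] (ι → ℝ)) → List ((ι → ℝ) →ₗ[ℝ] ℝ)
  | .leaf _, _ => []
  | .node l r, Θ =>
      (evalFL l.leafSet).comp Θ :: (evalFL r.leafSet).comp Θ ::
        (flowForms ω l ((stepLmap ω l r).comp Θ) ++ flowForms ω r ((stepLmap ω l r).comp Θ))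

lemma flowNZ_iff (ω : ι → ι → ℝ) :
    ∀ (t : BTree ι) (Θ : (ι → ℝ) →ₗ[ℝ] (ι → ℝ)) (α : ι → ℝ),
      FlowNZ ω (Θ α) t ↔ ∀ g ∈ flowForms ω t Θ, g α ≠ 0
  | .leaf i, Θ, α => by simp [FlowNZ, flowForms]
  | .node l r, Θ, α => by
    have hl := flowNZ_iff ω l ((stepLmap ω l r).comp Θ) α
    have hr := flowNZ_iff ω r ((stepLmap ω l r).comp Θ) α
    have hstep : stepL ω (Θ α) l r = ((stepLmap ω l r).comp Θ) α := rfl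
    simp only [FlowNZ]
    constructor
    · rintro ⟨h1, h2, h3, h4⟩ g hg
      rw [hstep] at h3 h4
      simp only [flowForms, List.mem_cons, List.mem_append] at hg
      rcases hg with rfl | rfl | hg | hg
      · exact h1
      · exact h2
      · exact hl.1 h3 g hg
      · exact hr.1 h4 g hg
    · intro h
      refine ⟨h ((evalFL l.leafSet).comp Θ) (by simp [flowForms]),
        h ((evalFL r.leafSet).comp Θ) (by simp [flowForms]), ?_, ?_⟩
      · rw [hstep]
        exact hl.2 fun g hg => h g (by simp [flowForms, hg])
      · rw [hstep]
        exact hr.2 fun g hg => h g (by simp [flowForms, hg])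

/-! ### Witness vectors -/

/-- The vector `e_i - e_j`. -/
noncomputable def uvec (i j : ι) : ι → ℝ :=
  fun k => (if k = i then (1 : ℝ) else 0) - (if k = j then 1 else 0)

lemma evalF_uvec (i j : ι) (S : Finset ι) :
    evalF (uvec i j) S = (if i ∈ S then (1 : ℝ) else 0) - (if j ∈ S then 1 else 0) := by
  simp [evalF, uvec, Finset.sum_sub_distrib, Finset.sum_ite_eq']

lemma leafSet_node (l r : BTree ι) : (BTree.node l r).leafSet = l.leafSet ∪ r.leafSet := by
  simp [leafSet, leafList]

lemma leafSet_nonempty (t : BTree ι) : ∃ i, i ∈ t.leafSet := by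
  induction t with
  | leaf i => exact ⟨i, by simp [leafSet, leafList]⟩
  | node l r ihl ihr =>
    obtain ⟨i, hi⟩ := ihl
    exact ⟨i, by rw [leafSet_node]; exact Finset.mem_union_left _ hi⟩

lemma flowForms_witness (ω : ι → ι → ℝ) (J : Finset ι) (t : BTree ι) :
    ∀ (Θ : (ι → ℝ) →ₗ[ℝ] (ι → ℝ)),
      t.leafList.Nodup → t.leafSet ⊆ J →
      (∀ i j, i ∈ t.leafSet → j ∈ t.leafSet → i ≠ j → Θ (uvec i j) = uvec i j) →
      ∀ g ∈ flowForms ω t Θ, ∃ β : ι → ℝ, evalF β J = 0 ∧ g β ≠ 0 := by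
  induction t with
  | leaf i => intro Θ _ _ _ g hg; simp [flowForms] at hg
  | node l r ihl ihr =>
    intro Θ hnd hsub hinv g hg
    obtain ⟨ndl, ndr, hdisj⟩ := List.nodup_append.1 hnd
    have hmem : ∀ {i : ι}, i ∈ l.leafSet → i ∉ r.leafSet := by
      intro i hi hj
      exact hdisj _ (List.mem_toFinset.1 hi) _ (List.mem_toFinset.1 hj) rfl
    have hmeml : ∀ {i : ι}, i ∈ l.leafSet → i ∈ (BTree.node l r).leafSet := by
      intro i hi; rw [leafSet_node]; exact Finset.mem_union_left _ hi
    have hmemr : ∀ {i : ι}, i ∈ r.leafSet → i ∈ (BTree.node l r).leafSet := by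
      intro i hi; rw [leafSet_node]; exact Finset.mem_union_right _ hi
    obtain ⟨i0, hi0⟩ := leafSet_nonempty l
    obtain ⟨j0, hj0⟩ := leafSet_nonempty r
    have hij : i0 ≠ j0 := fun h => hmem hi0 (h ▸ hj0)
    have hβJ : evalF (uvec i0 j0) J = 0 := by
      rw [evalF_uvec, if_pos (hsub (hmeml hi0)), if_pos (hsub (hmemr hj0))]; ring
    have hΘβ : Θ (uvec i0 j0) = uvec i0 j0 := hinv i0 j0 (hmeml hi0) (hmemr hj0) hij
    have hstep0 : ∀ u : ι → ℝ, evalF u l.leafSet = 0 → stepL ω u l r = u := by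
      intro u hu
      funext k
      simp [stepL, hu]
    have hinvl : ∀ i j, i ∈ l.leafSet → j ∈ l.leafSet → i ≠ j →
        ((stepLmap ω l r).comp Θ) (uvec i j) = uvec i j := by
      intro i j hi hj hij'
      have h1 : Θ (uvec i j) = uvec i j := hinv i j (hmeml hi) (hmeml hj) hij'
      have h2 : evalF (uvec i j) l.leafSet = 0 := by
        rw [evalF_uvec, if_pos hi, if_pos hj]; ring
      show stepLmap ω l r (Θ (uvec i j)) = uvec i j
      rw [h1, stepLmap_apply, hstep0 _ h2]
    have hinvr : ∀ i j, i ∈ r.leafSet → j ∈ r.leafSet → i ≠ j →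
        ((stepLmap ω l r).comp Θ) (uvec i j) = uvec i j := by
      intro i j hi hj hij'
      have h1 : Θ (uvec i j) = uvec i j := hinv i j (hmemr hi) (hmemr hj) hij'
      have h2 : evalF (uvec i j) l.leafSet = 0 := by
        rw [evalF_uvec, if_neg (fun h => hmem h hi), if_neg (fun h => hmem h hj)]; ring
      show stepLmap ω l r (Θ (uvec i j)) = uvec i j
      rw [h1, stepLmap_apply, hstep0 _ h2]
    simp only [flowForms, List.mem_cons, List.mem_append] at hg
    rcases hg with rfl | rfl | hg | hg
    · refine ⟨uvec i0 j0, hβJ, ?_⟩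
      show evalFL l.leafSet (Θ (uvec i0 j0)) ≠ 0
      rw [hΘβ, evalFL_apply, evalF_uvec, if_pos hi0, if_neg (fun h => hmem h hj0)]
      norm_num
    · refine ⟨uvec i0 j0, hβJ, ?_⟩
      show evalFL r.leafSet (Θ (uvec i0 j0)) ≠ 0
      rw [hΘβ, evalFL_apply, evalF_uvec, if_neg (hmem hi0), if_pos hj0]
      norm_num
    · exact ihl _ ndl (fun x hx => hsub (hmeml hx)) hinvl g hg
    · exact ihr _ ndr (fun x hx => hsub (hmemr hx)) hinvr g hg

/-! ### Finiteness of decorated trees -/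

def encodeT : BTree ι → List (Option ι)
  | .leaf i => [some i]
  | .node l r => none :: (encodeT l ++ encodeT r)

lemma encodeT_append_inj : ∀ (t t' : BTree ι) (s s' : List (Option ι)),
    encodeT t ++ s = encodeT t' ++ s' → t = t' ∧ s = s' := by
  intro t
  induction t with
  | leaf i =>
    intro t' s s' h
    cases t' with
    | leaf i' =>
      simp only [encodeT, List.cons_append, List.nil_append, List.cons.injEq,
        Option.some.injEq] at h
      exact ⟨by rw [h.1], h.2⟩
    | node l' r' =>
      simp only [encodeT, List.cons_append, List.cons.injEq] at h
      exact absurd h.1 (by simp)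
  | node l r ihl ihr =>
    intro t' s s' h
    cases t' with
    | leaf i' =>
      simp only [encodeT, List.cons_append, List.cons.injEq] at h
      exact absurd h.1 (by simp)
    | node l' r' =>
      simp only [encodeT, List.cons_append, List.append_assoc, List.cons.injEq] at h
      obtain ⟨rfl, h2⟩ := ihl l' _ _ h.2
      obtain ⟨rfl, h3⟩ := ihr r' _ _ h2
      exact ⟨rfl, h3⟩

lemma encodeT_injective : Function.Injective (encodeT (ι := ι)) := by
  intro t t' h
  exact (encodeT_append_inj t t' [] [] (by simp [h])).1

lemma encodeT_length (t : BTree ι) : (encodeT t).length + 1 = 2 * t.leafList.length := by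
  induction t with
  | leaf i => simp [encodeT, BTree.leafList]
  | node l r ihl ihr =>
    simp only [encodeT, BTree.leafList, List.length_cons, List.length_append] at *
    omega

lemma decorated_finite [Fintype ι] (ω : ι → ι → ℝ) (J : Finset ι) :
    {t : BTree ι | t.DecoratedBy J ∧ Teta ω t}.Finite := by
  have h1 : {l : List (Option ι) | l.length ≤ 2 * Fintype.card ι}.Finite :=
    List.finite_length_le _ _
  refine Set.Finite.subset (Set.Finite.preimage encodeT_injective.injOn h1) ?_
  intro t ht
  have hlen : t.leafList.length ≤ Fintype.card ι := ht.1.1.length_le_card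
  have h2 := encodeT_length t
  simp only [Set.mem_preimage, Set.mem_setOf_eq]
  omega

/-! ### Openness and density -/

lemma evalF_add (x y : ι → ℝ) (S : Finset ι) : evalF (x + y) S = evalF x S + evalF y S := by
  simp [evalF, Finset.sum_add_distrib]

lemma evalF_smul (c : ℝ) (x : ι → ℝ) (S : Finset ι) : evalF (c • x) S = c * evalF x S := by
  simp [evalF, Finset.mul_sum]

lemma isOpen_single [Fintype ι] (J : Finset ι) (g : (ι → ℝ) →ₗ[ℝ] ℝ) :
    IsOpen {α : {θ : ι → ℝ // evalF θ J = 0} | g α.1 ≠ 0} := by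
  have hcont : Continuous fun α : {θ : ι → ℝ // evalF θ J = 0} => g α.1 :=
    g.continuous_of_finiteDimensional.comp continuous_subtype_val
  exact isOpen_ne.preimage hcont

lemma dense_single [Fintype ι] (J : Finset ι) (g : (ι → ℝ) →ₗ[ℝ] ℝ)
    (β : ι → ℝ) (hβJ : evalF β J = 0) (hβ : g β ≠ 0) :
    Dense {α : {θ : ι → ℝ // evalF θ J = 0} | g α.1 ≠ 0} := by
  intro x
  rcases eq_or_ne (g x.1) 0 with h0 | h0
  · set c : ℝ → {θ : ι → ℝ // evalF θ J = 0} :=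
      fun t => ⟨x.1 + t • β, by rw [evalF_add, evalF_smul, x.2, hβJ]; ring⟩ with hc
    have hcont : Continuous c := by
      refine Continuous.subtype_mk ?_ _
      exact continuous_const.add (continuous_id.smul continuous_const)
    have hc0 : c 0 = x := by
      apply Subtype.ext
      simp [hc]
    have htend : Filter.Tendsto c (nhdsWithin (0 : ℝ) {(0 : ℝ)}ᶜ) (nhds x) := by
      rw [← hc0]
      exact (hcont.tendsto 0).mono_left nhdsWithin_le_nhds
    refine mem_closure_of_tendsto htend ?_
    filter_upwards [self_mem_nhdsWithin] with t ht
    show g (c t).1 ≠ 0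
    simp only [hc, map_add, map_smul, h0, smul_eq_mul, zero_add]
    exact mul_ne_zero ht hβ
  · exact subset_closure h0

lemma setOf_cons (J : Finset ι) (g : (ι → ℝ) →ₗ[ℝ] ℝ) (L : List ((ι → ℝ) →ₗ[ℝ] ℝ)) :
    {α : {θ : ι → ℝ // evalF θ J = 0} | ∀ g' ∈ g :: L, g' α.1 ≠ 0}
      = {α : {θ : ι → ℝ // evalF θ J = 0} | g α.1 ≠ 0}
        ∩ {α : {θ : ι → ℝ // evalF θ J = 0} | ∀ g' ∈ L, g' α.1 ≠ 0} := by
  ext α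
  simp [List.forall_mem_cons]

lemma isOpen_forms [Fintype ι] (J : Finset ι) (L : List ((ι → ℝ) →ₗ[ℝ] ℝ)) :
    IsOpen {α : {θ : ι → ℝ // evalF θ J = 0} | ∀ g ∈ L, g α.1 ≠ 0} := by
  induction L with
  | nil => simpa using isOpen_univ
  | cons g L ih =>
    rw [setOf_cons]
    exact (isOpen_single J g).inter ih

lemma dense_forms [Fintype ι] (J : Finset ι) (L : List ((ι → ℝ) →ₗ[ℝ] ℝ))
    (hL : ∀ g ∈ L, ∃ β : ι → ℝ, evalF β J = 0 ∧ g β ≠ 0) :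
    Dense {α : {θ : ι → ℝ // evalF θ J = 0} | ∀ g ∈ L, g α.1 ≠ 0} := by
  induction L with
  | nil => simpa using dense_univ
  | cons g L ih =>
    obtain ⟨β, hβJ, hβ⟩ := hL g List.mem_cons_self
    rw [setOf_cons]
    exact (dense_single J g β hβJ hβ).inter_of_isOpen_left
      (ih fun g' hg' => hL g' (List.mem_cons_of_mem _ hg')) (isOpen_single J g)

end VJetaAux

open VJetaAux in
/-- The set `V_{J,η}` of points `α` of the hyperplane `e_J^⊥` such that `α` is
`(J,η)`-generic and `η` is `(J,α)`-generic is the complement of finitely many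
hyperplanes of `e_J^⊥`; in particular it is open and dense in `e_J^⊥`. -/
theorem V_J_eta_open_dense {ι : Type} [Fintype ι] [DecidableEq ι]
    (η : ι → ι → ℤ) (hη : ∀ i j, η j i = - η i j) (J : Finset ι) :
    ∃ (n : ℕ) (f : Fin n → ((ι → ℝ) →ₗ[ℝ] ℝ)),
      (∀ k : Fin n, ∃ β : {θ : ι → ℝ // evalF θ J = 0}, f k β.1 ≠ 0) ∧
      (∀ α : {θ : ι → ℝ // evalF θ J = 0},
        (JGeneric (fun i j => (η i j : ℝ)) J α.1 ∧
          EtaGenericAt (fun i j => (η i j : ℝ)) J α.1) ↔ ∀ k : Fin n, f k α.1 ≠ 0) ∧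
      IsOpen {α : {θ : ι → ℝ // evalF θ J = 0} |
        JGeneric (fun i j => (η i j : ℝ)) J α.1 ∧
          EtaGenericAt (fun i j => (η i j : ℝ)) J α.1} ∧
      Dense {α : {θ : ι → ℝ // evalF θ J = 0} |
        JGeneric (fun i j => (η i j : ℝ)) J α.1 ∧
          EtaGenericAt (fun i j => (η i j : ℝ)) J α.1} := by
  classical
  set ω : ι → ι → ℝ := fun i j => (η i j : ℝ) with hωdef
  set S : Set (BTree ι) := {t : BTree ι | t.DecoratedBy J ∧ Teta ω t} with hSdef
  have hfin : S.Finite := decorated_finite ω J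
  haveI : Fintype S := hfin.fintype
  let σ : Type := Σ t : S, Fin (flowForms ω t.1 LinearMap.id).length
  haveI : Fintype σ := inferInstance
  let e : σ ≃ Fin (Fintype.card σ) := Fintype.equivFin σ
  let F : σ → ((ι → ℝ) →ₗ[ℝ] ℝ) := fun p => (flowForms ω p.1.1 LinearMap.id).get p.2
  -- witnesses for every form of every relevant tree
  have hwit : ∀ t : BTree ι, t ∈ S → ∀ g ∈ flowForms ω t LinearMap.id,
      ∃ β : ι → ℝ, evalF β J = 0 ∧ g β ≠ 0 := by
    intro t ht g hg
    refine flowForms_witness ω J t LinearMap.id ht.1.1 ?_ (fun i j _ _ _ => rfl) g hg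
    rw [ht.1.2]
  -- the genericity conditions are equivalent to nonvanishing of all forms
  have h2 : ∀ α : ι → ℝ,
      (JGeneric ω J α ∧ EtaGenericAt ω J α) ↔
        ∀ t ∈ S, ∀ g ∈ flowForms ω t LinearMap.id, g α ≠ 0 := by
    intro α
    constructor
    · rintro ⟨-, hEta⟩ t ht g hg
      have hflow : FlowNZ ω α t := hEta t ht.1 ht.2
      exact (flowNZ_iff ω t LinearMap.id α).1 hflow g hg
    · intro h
      have hflow : ∀ t ∈ S, FlowNZ ω α t := fun t ht =>
        (flowNZ_iff ω t LinearMap.id α).2 (h t ht)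
      constructor
      · intro t l r hd heq hp
        have ht : t ∈ S := ⟨hd, l, r, heq, hp⟩
        have hF := hflow t ht
        rw [heq] at hF
        simp only [FlowNZ] at hF
        exact hF.1
      · intro t hd hT
        exact hflow t ⟨hd, hT⟩
  -- reindexing through the finite sigma type
  have h3 : ∀ α : ι → ℝ,
      (∀ t ∈ S, ∀ g ∈ flowForms ω t LinearMap.id, g α ≠ 0) ↔
        ∀ k : Fin (Fintype.card σ), F (e.symm k) α ≠ 0 := by
    intro α
    constructor
    · intro h k
      exact h (e.symm k).1.1 (e.symm k).1.2 _ (List.get_mem _ _)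
    · intro h t ht g hg
      obtain ⟨m, hm⟩ := List.mem_iff_get.1 hg
      have hk := h (e ⟨⟨t, ht⟩, m⟩)
      simp only [F, Equiv.symm_apply_apply] at hk
      rwa [hm] at hk
  have hofn : ∀ α : ι → ℝ,
      (∀ g ∈ List.ofFn (fun k => F (e.symm k)), g α ≠ 0) ↔
        ∀ k : Fin (Fintype.card σ), F (e.symm k) α ≠ 0 := by
    intro α
    constructor
    · intro h k
      exact h _ (by rw [List.mem_ofFn]; exact ⟨k, rfl⟩)
    · intro h g hg
      rw [List.mem_ofFn] at hg
      obtain ⟨k, rfl⟩ := hg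
      exact h k
  have hset : {α : {θ : ι → ℝ // evalF θ J = 0} | JGeneric ω J α.1 ∧ EtaGenericAt ω J α.1}
      = {α : {θ : ι → ℝ // evalF θ J = 0} |
          ∀ g ∈ List.ofFn (fun k => F (e.symm k)), g α.1 ≠ 0} := by
    ext α
    simp only [Set.mem_setOf_eq]
    rw [h2 α.1, h3 α.1, hofn α.1]
  refine ⟨Fintype.card σ, fun k => F (e.symm k), ?_, ?_, ?_, ?_⟩
  · -- each form has a witness on the hyperplane
    intro k
    obtain ⟨β, hβJ, hβ⟩ := hwit (e.symm k).1.1 (e.symm k).1.2 _ (List.get_mem _ _)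
    exact ⟨⟨β, hβJ⟩, hβ⟩
  · -- the characterization
    intro α
    exact (h2 α.1).trans (h3 α.1)
  · -- openness
    rw [hset]
    exact isOpen_forms J _
  · -- density
    rw [hset]
    refine dense_forms J _ ?_
    intro g hg
    rw [List.mem_ofFn] at hg
    obtain ⟨k, rfl⟩ := hg
    exact hwit (e.symm k).1.1 (e.symm k).1.2 _ (List.get_mem _ _)
end

section
/- Let g = ⊕_{n∈N^+} g_n be a finitely N^+-graded Lie algebra satisfying [g_{n_1}, g_{n_2}] = 0 whenever ⟨n_1, n_2⟩ = 0 for a skew-symmetric form ⟨−,−⟩. For primitive n̄ ∈ N^+, the subspace g_{n̄,0}^⊥ = ⊕_{⟨n̄,n⟩=0, n∉Z_{≥1}n̄} g_n is a Lie ideal of g_{n̄,0} = ⊕_{⟨n̄,n⟩=0} g_n, and the quotient g_{n̄,0}/g_{n̄,0}^⊥ is the abelian Lie algebra g_{n̄,0}^∥ = ⊕_{n∈Z_{≥1}n̄} g_n. -/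
/-- `N⁺`: nonzero elements of `N = ℤ^d` with nonnegative coordinates. -/
def NPlus (d : ℕ) : Set (Fin d → ℤ) := {n | (∀ i, 0 ≤ n i) ∧ n ≠ 0}

/-- Bilinear induction: a property of brackets that holds for homogeneous elements
and is closed under the submodule operations extends to the spanned subspaces. -/
lemma bracket_biSup_mem {L : Type*} [LieRing L] [LieAlgebra ℚ L] {ι : Type*}
    (g : ι → Submodule ℚ L) (S T : Set ι) (P : Submodule ℚ L)
    (h : ∀ n ∈ S, ∀ m ∈ T, ∀ x ∈ g n, ∀ y ∈ g m, ⁅x, y⁆ ∈ P) :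
    ∀ x ∈ (⨆ n ∈ S, g n), ∀ y ∈ (⨆ m ∈ T, g m), ⁅x, y⁆ ∈ P := by
  intro x hx
  let Q : Submodule ℚ L :=
    { carrier := {x | ∀ y ∈ (⨆ m ∈ T, g m), ⁅x, y⁆ ∈ P}
      add_mem' := fun ha hb y hy => by rw [add_lie]; exact P.add_mem (ha y hy) (hb y hy)
      zero_mem' := fun y hy => by rw [zero_lie]; exact P.zero_mem
      smul_mem' := fun c a ha y hy => by rw [smul_lie]; exact P.smul_mem c (ha y hy) }
  have hQ : (⨆ n ∈ S, g n) ≤ Q := by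
    refine iSup₂_le fun n hn => ?_
    intro a ha y hy
    let R : Submodule ℚ L :=
      { carrier := {y | ⁅a, y⁆ ∈ P}
        add_mem' := fun {u v} hu hv => show ⁅a, u + v⁆ ∈ P by
          rw [lie_add]; exact P.add_mem hu hv
        zero_mem' := show ⁅a, (0 : L)⁆ ∈ P by rw [lie_zero]; exact P.zero_mem
        smul_mem' := fun c u hu => show ⁅a, c • u⁆ ∈ P by
          rw [lie_smul]; exact P.smul_mem c hu }
    have hR : (⨆ m ∈ T, g m) ≤ R := iSup₂_le fun m hm u hu => h n hn m hm a ha u hu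
    exact hR hy
  exact hQ hx

/-- For a finitely `N⁺`-graded Lie algebra `g = ⊕ g_n` over `ℚ` with
`[g_{n₁}, g_{n₂}] = 0` whenever `⟨n₁, n₂⟩ = 0`, and a primitive `n̄ ∈ N⁺`:
`g_{n̄,0}^⊥ = ⊕_{⟨n̄,n⟩=0, n∉ℤ_{≥1}n̄} g_n` is a Lie ideal of
`g_{n̄,0} = ⊕_{⟨n̄,n⟩=0} g_n`, and the quotient `g_{n̄,0}/g_{n̄,0}^⊥` is the abelian
Lie algebra `g_{n̄,0}^∥ = ⊕_{n∈ℤ_{≥1}n̄} g_n`: all brackets of elements of `g_{n̄,0}`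
lie in `g_{n̄,0}^⊥`, and `g_{n̄,0} = g_{n̄,0}^∥ ⊕ g_{n̄,0}^⊥`. -/
theorem graded_lie_algebra_parallel_perp_decomposition {d : ℕ}
    (B : (Fin d → ℤ) → (Fin d → ℤ) → ℝ)
    (hBskew : ∀ n m, B m n = - B n m)
    (hBadd₁ : ∀ n m m', B (n + m) m' = B n m' + B m m')
    (hBadd₂ : ∀ n m m', B n (m + m') = B n m + B n m')
    {L : Type*} [LieRing L] [LieAlgebra ℚ L]
    (g : (Fin d → ℤ) → Submodule ℚ L)
    (hsupp : ∀ n, g n ≠ ⊥ → n ∈ NPlus d)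
    (hfin : {n | g n ≠ ⊥}.Finite)
    (hind : iSupIndep g)
    (hspan : (⨆ n, g n) = ⊤)
    (hbr : ∀ n m (x y : L), x ∈ g n → y ∈ g m → ⁅x, y⁆ ∈ g (n + m))
    (hvanish : ∀ n m (x y : L), x ∈ g n → y ∈ g m → B n m = 0 → ⁅x, y⁆ = 0)
    (nbar : Fin d → ℤ) (hnbar : nbar ∈ NPlus d)
    (hprim : ∀ (k : ℤ) (m : Fin d → ℤ), nbar = k • m → k = 1 ∨ k = -1) :
    -- `g_{n̄,0}^⊥` is a Lie ideal of `g_{n̄,0}`: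
    (∀ x y : L, x ∈ (⨆ n ∈ {n | B nbar n = 0}, g n) →
        y ∈ (⨆ n ∈ {n | B nbar n = 0 ∧ ¬∃ k : ℤ, 1 ≤ k ∧ n = k • nbar}, g n) →
        ⁅x, y⁆ ∈ (⨆ n ∈ {n | B nbar n = 0 ∧ ¬∃ k : ℤ, 1 ≤ k ∧ n = k • nbar}, g n)) ∧
    -- the quotient `g_{n̄,0}/g_{n̄,0}^⊥` is abelian:
    (∀ x y : L, x ∈ (⨆ n ∈ {n | B nbar n = 0}, g n) →
        y ∈ (⨆ n ∈ {n | B nbar n = 0}, g n) →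
        ⁅x, y⁆ ∈ (⨆ n ∈ {n | B nbar n = 0 ∧ ¬∃ k : ℤ, 1 ≤ k ∧ n = k • nbar}, g n)) ∧
    -- `g_{n̄,0} = g_{n̄,0}^∥ ⊕ g_{n̄,0}^⊥`, identifying the quotient with `g_{n̄,0}^∥`:
    ((⨆ n ∈ {n | ∃ k : ℤ, 1 ≤ k ∧ n = k • nbar}, g n) ⊔
        (⨆ n ∈ {n | B nbar n = 0 ∧ ¬∃ k : ℤ, 1 ≤ k ∧ n = k • nbar}, g n)
      = (⨆ n ∈ {n | B nbar n = 0}, g n)) ∧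
    ((⨆ n ∈ {n | ∃ k : ℤ, 1 ≤ k ∧ n = k • nbar}, g n) ⊓
        (⨆ n ∈ {n | B nbar n = 0 ∧ ¬∃ k : ℤ, 1 ≤ k ∧ n = k • nbar}, g n) = ⊥) := by
  classical
  -- basic consequences of skew-symmetry and biadditivity
  have hB0 : ∀ n, B n n = 0 := fun n => by have := hBskew n n; linarith
  have hBz₁ : ∀ m, B 0 m = 0 := fun m => by
    have h := hBadd₁ 0 0 m; rw [add_zero] at h; linarith
  have hsub₁ : ∀ a b m, B (a - b) m = B a m - B b m := fun a b m => by
    have h := hBadd₁ (a - b) b m; rw [sub_add_cancel] at h; linarith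
  have hzsmul₁ : ∀ (k : ℤ) n m, B (k • n) m = k * B n m := by
    intro k n m
    induction k using Int.induction_on with
    | zero => simpa using hBz₁ m
    | succ i ih => rw [add_smul, one_smul, hBadd₁, ih]; push_cast; ring
    | pred i ih => rw [sub_smul, one_smul, hsub₁, ih]; push_cast; ring
  have hzsmul₂ : ∀ (k : ℤ) n m, B n (k • m) = k * B n m := by
    intro k n m
    rw [hBskew (k • m) n, hzsmul₁, hBskew n m]; ring
  -- parallel vectors are orthogonal to nbar
  have hparB : ∀ n, (∃ k : ℤ, 1 ≤ k ∧ n = k • nbar) → B nbar n = 0 := by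
    rintro n ⟨k, -, rfl⟩
    rw [hzsmul₂, hB0]; ring
  -- key homogeneous computation
  have main : ∀ n ∈ {n | B nbar n = 0}, ∀ m ∈ {n | B nbar n = 0}, ∀ x ∈ g n, ∀ y ∈ g m,
      ⁅x, y⁆ ∈ (⨆ n ∈ {n | B nbar n = 0 ∧ ¬∃ k : ℤ, 1 ≤ k ∧ n = k • nbar}, g n) := by
    intro n hn m hm x hx y hy
    by_cases hpar : ∃ k : ℤ, 1 ≤ k ∧ n + m = k • nbar
    · obtain ⟨k, hk, hkeq⟩ := hpar
      have hBnm : B n m = 0 := by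
        have h1 : B (n + m) m = B n m := by rw [hBadd₁, hB0 m, add_zero]
        have h2 : B (n + m) m = 0 := by
          have hm' : B nbar m = 0 := hm
          rw [hkeq, hzsmul₁, hm']; ring
        linarith
      rw [hvanish n m x y hx hy hBnm]
      exact Submodule.zero_mem _
    · have hmem : (n + m) ∈ {n | B nbar n = 0 ∧ ¬∃ k : ℤ, 1 ≤ k ∧ n = k • nbar} := by
        refine ⟨?_, hpar⟩
        show B nbar (n + m) = 0
        rw [hBadd₂, hn, hm, add_zero]
      exact le_biSup g hmem (hbr n m x y hx hy)
  have part2 : ∀ x y : L, x ∈ (⨆ n ∈ {n | B nbar n = 0}, g n) →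
      y ∈ (⨆ n ∈ {n | B nbar n = 0}, g n) →
      ⁅x, y⁆ ∈ (⨆ n ∈ {n | B nbar n = 0 ∧ ¬∃ k : ℤ, 1 ≤ k ∧ n = k • nbar}, g n) := by
    intro x y hx hy
    exact bracket_biSup_mem g _ _ _ main x hx y hy
  have hsubset : (⨆ n ∈ {n | B nbar n = 0 ∧ ¬∃ k : ℤ, 1 ≤ k ∧ n = k • nbar}, g n)
      ≤ (⨆ n ∈ {n | B nbar n = 0}, g n) :=
    biSup_mono fun n hn => hn.1
  refine ⟨fun x y hx hy => part2 x y hx (hsubset hy), part2, ?_, ?_⟩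
  · -- decomposition: parallel ⊔ perp = all
    have hsetunion : {n | B nbar n = 0} =
        {n | ∃ k : ℤ, 1 ≤ k ∧ n = k • nbar} ∪
          {n | B nbar n = 0 ∧ ¬∃ k : ℤ, 1 ≤ k ∧ n = k • nbar} := by
      ext n
      simp only [Set.mem_setOf_eq, Set.mem_union]
      constructor
      · intro h
        by_cases hp : ∃ k : ℤ, 1 ≤ k ∧ n = k • nbar
        · exact Or.inl hp
        · exact Or.inr ⟨h, hp⟩
      · rintro (hp | ⟨h, -⟩)
        · exact hparB n hp
        · exact h
    rw [hsetunion]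
    exact iSup_union.symm
  · -- trivial intersection via independence
    rw [eq_bot_iff]
    intro x hx
    obtain ⟨hx₁, hx₂⟩ := Submodule.mem_inf.mp hx
    rw [Submodule.mem_biSup_iff_exists_dfinsupp
      (fun n => n ∈ {n | ∃ k : ℤ, 1 ≤ k ∧ n = k • nbar}) g] at hx₁
    rw [Submodule.mem_biSup_iff_exists_dfinsupp
      (fun n => n ∈ {n | B nbar n = 0 ∧ ¬∃ k : ℤ, 1 ≤ k ∧ n = k • nbar}) g] at hx₂
    obtain ⟨v, hv⟩ := hx₁
    obtain ⟨w, hw⟩ := hx₂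
    have hvw := hind.dfinsupp_lsum_injective (hv.trans hw.symm)
    have hzero : v.filter (fun n => n ∈ {n | ∃ k : ℤ, 1 ≤ k ∧ n = k • nbar}) = 0 := by
      ext i
      by_cases hp : i ∈ {n | ∃ k : ℤ, 1 ≤ k ∧ n = k • nbar}
      · have h1 := DFunLike.congr_fun hvw i
        rw [DFinsupp.filter_apply_pos v hp] at h1
        rw [DFinsupp.filter_apply_pos v hp, DFinsupp.zero_apply, h1,
          DFinsupp.filter_apply_neg w (fun h => h.2 hp)]
      · rw [DFinsupp.filter_apply_neg v hp, DFinsupp.zero_apply]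
    rw [Submodule.mem_bot, ← hv, hzero, map_zero]
end

section
/- If τ ∈ γ^⊥ ⊂ M_R is γ-generic (i.e., τ(γ') = 0 implies γ' collinear with γ) where γ = \sum_{i∈I} γ_i with γ_i ∈ N, then α := q(τ) = τ∘p ∈ ℳ_R is (I,η)-generic, where p: 𝒩=⊕_{i∈I}Z e_i → N sends e_i ↦ γ_i and η(e_i,e_j) = ⟨γ_i, γ_j⟩. -/
/-- If `τ ∈ γ^⊥` is `γ`-generic (`τ(γ') = 0` implies `γ'` collinear with `γ`), where
`γ = ∑_{i∈I} γᵢ`, then `α := q(τ) = τ ∘ p` is `(I,η)`-generic, where `p : ⊕ ℤ e_i → N`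
sends `e_i ↦ γᵢ` (so `α(e_i) = τ(γᵢ)`) and `η(e_i, e_j) = ⟨γᵢ, γⱼ⟩`. -/
theorem gamma_generic_pullback_generic {ι : Type} [Fintype ι] [DecidableEq ι]
    {N : Type*} [AddCommGroup N]
    (B : N → N → ℝ) (hBskew : ∀ x y, B y x = - B x y)
    (hBadd₁ : ∀ x y z, B (x + y) z = B x z + B y z)
    (hBadd₂ : ∀ x y z, B x (y + z) = B x y + B x z)
    (γ : ι → N) (τ : N →+ ℝ)
    (hτγ : τ (∑ i, γ i) = 0)
    (hgen : ∀ γ' : N, τ γ' = 0 →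
      ∃ a b : ℤ, ¬(a = 0 ∧ b = 0) ∧ a • γ' = b • (∑ i, γ i)) :
    JGeneric (fun i j => B (γ i) (γ j)) Finset.univ (fun i => τ (γ i)) := by
  -- B as additive hom in each variable
  have hB0₂ : ∀ x, B x 0 = 0 := by
    intro x
    have := hBadd₂ x 0 0
    simp only [add_zero] at this
    linarith
  have hB0₁ : ∀ y, B 0 y = 0 := by
    intro y
    have := hBadd₁ 0 0 y
    simp only [add_zero] at this
    linarith
  let L : N → N →+ ℝ := fun x =>
    { toFun := fun y => B x y
      map_zero' := hB0₂ x
      map_add' := fun y z => hBadd₂ x y z }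
  let R : N → N →+ ℝ := fun y =>
    { toFun := fun x => B x y
      map_zero' := hB0₁ y
      map_add' := fun x z => hBadd₁ x z y }
  have hself : ∀ x, B x x = 0 := by
    intro x
    have := hBskew x x
    linarith
  intro t l r hdec ht hpair hα
  obtain ⟨hnd, hset⟩ := hdec
  subst ht
  apply hpair
  -- leaf sets
  set S := l.leafSet with hS
  set S' := r.leafSet with hS'
  have hll : (BTree.node l r).leafList = l.leafList ++ r.leafList := rfl
  rw [hll] at hnd
  have hdisj : Disjoint S S' := by
    rw [hS, hS', BTree.leafSet, BTree.leafSet, List.disjoint_toFinset_iff_disjoint]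
    exact (List.nodup_append'.mp hnd).2.2
  have hunion : S ∪ S' = Finset.univ := by
    rw [← hset]
    rw [hS, hS', BTree.leafSet, BTree.leafSet, BTree.leafSet, hll]
    exact (List.toFinset_append).symm
  set gS := ∑ i ∈ S, γ i with hgS
  set gS' := ∑ i ∈ S', γ i with hgS'
  set gT := ∑ i, γ i with hgT
  have hsum : gS + gS' = gT := by
    rw [hgS, hgS', hgT, ← Finset.sum_union hdisj, hunion]
  -- pairS = B gS gS'
  have hpe : pairS (fun i j => B (γ i) (γ j)) S S' = B gS gS' := by
    calc pairS (fun i j => B (γ i) (γ j)) S S'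
        = ∑ i ∈ S, B (γ i) gS' := by
          apply Finset.sum_congr rfl
          intro i _
          exact (map_sum (L (γ i)) γ S').symm
      _ = B gS gS' := (map_sum (R gS') γ S).symm
  rw [hpe]
  -- τ gS = 0
  have hτS : τ gS = 0 := by
    have : evalF (fun i => τ (γ i)) S = τ gS := (map_sum τ γ S).symm
    rw [← this, hα]
  obtain ⟨a, b, hab, heq⟩ := hgen gS hτS
  have hBgT : B gS gT = 0 := by
    by_cases ha : a = 0
    · have hb : b ≠ 0 := fun hb => hab ⟨ha, hb⟩
      rw [ha, zero_smul] at heq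
      have h0 : b • gT = 0 := heq.symm
      have : (L gS) (b • gT) = b • (L gS) gT := map_zsmul (L gS) b gT
      rw [h0, map_zero] at this
      have : (b : ℝ) * B gS gT = 0 := by
        simpa [zsmul_eq_mul, L] using this.symm
      rcases mul_eq_zero.mp this with h | h
      · exact absurd (by exact_mod_cast h) hb
      · exact h
    · have h1 : (R gT) (a • gS) = (R gT) (b • gT) := by rw [heq]
      rw [map_zsmul, map_zsmul] at h1
      have h2 : (a : ℝ) * B gS gT = (b : ℝ) * B gT gT := by
        simpa [zsmul_eq_mul, R] using h1
      rw [hself gT, mul_zero] at h2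
      rcases mul_eq_zero.mp h2 with h | h
      · exact absurd (by exact_mod_cast h) ha
      · exact h
  -- B gS gS' = B gS gT - B gS gS = 0
  have : B gS gT = B gS gS + B gS gS' := by
    rw [← hsum] at hBgT ⊢
    exact hBadd₂ gS gS gS'
  rw [hself gS, zero_add] at this
  rw [← this, hBgT]
end
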